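/- A bounded convex polytope P^H = {x ∈ ℝ^n : A x ⪯ b} with nonempty interior equals the image of the standard simplex {w ∈ ℝ^{n̂} : w ⪰ 0, ‖w‖₁ ≤ 1} under the affine map w ↦ v₀ + V̂ w, where v₀, ..., v_{n̂} are the vertices of P^H (i.e., P^H is the convex hull of its vertices). -/

import Mathlib

/-- The convex hull of the range of `v : Fin (nh+1) → E` is the image of the
standard simplex under `w ↦ v 0 + ∑ i, w i • (v i.succ - v 0)`. -/
lemma convexHull_range_eq_image_simplex {n nh : ℕ} (v : Fin (nh + 1) → (Fin n → ℝ)) :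
    convexHull ℝ (Set.range v) =
      (fun w : Fin nh → ℝ => v 0 + ∑ i : Fin nh, (w i) • (v i.succ - v 0)) ''
        {w : Fin nh → ℝ | (∀ i, 0 ≤ w i) ∧ (∑ i, w i) ≤ 1} := by
  set f : (Fin nh → ℝ) → (Fin n → ℝ) :=
    fun w => v 0 + ∑ i : Fin nh, (w i) • (v i.succ - v 0) with hf
  have key : ∀ w : Fin nh → ℝ,
      f w = (1 - ∑ i, w i) • v 0 + ∑ i : Fin nh, (w i) • v i.succ := by
    intro w
    simp only [hf, smul_sub, Finset.sum_sub_distrib, sub_smul, one_smul, ← Finset.sum_smul]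
    abel
  apply Set.Subset.antisymm
  · apply convexHull_min
    · rintro x ⟨j, rfl⟩
      induction j using Fin.cases with
      | zero =>
          exact ⟨0, ⟨fun i => le_refl 0, by simp⟩, by simp [hf]⟩
      | succ i =>
          refine ⟨fun j => if j = i then 1 else 0, ⟨fun j => by positivity, by simp⟩, ?_⟩
          simp [hf, Finset.sum_ite_eq']
    · rintro x ⟨w, ⟨hw0, hw1⟩, rfl⟩ y ⟨w', ⟨hw0', hw1'⟩, rfl⟩ a c ha hc hac
      refine ⟨a • w + c • w', ⟨fun i => by
        have := hw0 i; have := hw0' i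
        simp only [Pi.add_apply, Pi.smul_apply, smul_eq_mul]; positivity, ?_⟩, ?_⟩
      · simp only [Pi.add_apply, Pi.smul_apply, smul_eq_mul, Finset.sum_add_distrib,
          ← Finset.mul_sum]
        calc a * ∑ i, w i + c * ∑ i, w' i ≤ a * 1 + c * 1 := by
              gcongr <;> assumption
          _ = 1 := by linarith
      · have hc' : c = 1 - a := by linarith
        subst hc'
        have e1 : ∑ i, (a • w + (1 - a) • w') i • (v i.succ) =
            a • (∑ i, w i • v i.succ) + (1 - a) • (∑ i, w' i • v i.succ) := by
          rw [Finset.smul_sum, Finset.smul_sum, ← Finset.sum_add_distrib]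
          refine Finset.sum_congr rfl fun i _ => ?_
          simp [add_smul, smul_smul]
        have e2 : ∑ i, (a • w + (1 - a) • w') i =
            a * (∑ i, w i) + (1 - a) * (∑ i, w' i) := by
          simp [Finset.sum_add_distrib, Finset.mul_sum]
        show f (a • w + (1 - a) • w') = a • f w + (1 - a) • f w'
        rw [key, key, key, e1, e2]
        rw [show (1 - (a * (∑ i, w i) + (1 - a) * (∑ i, w' i)))
            = a * (1 - ∑ i, w i) + (1 - a) * (1 - ∑ i, w' i) by ring]
        simp only [smul_add, add_smul, mul_smul]
        abel
  · rintro x ⟨w, ⟨hw0, hw1⟩, rfl⟩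
    rw [key]
    have := Finset.centerMass_mem_convexHull (Finset.univ : Finset (Fin (nh + 1)))
      (w := Fin.cons (1 - ∑ i, w i) w)
      (z := v)
      (by
        intro i _
        induction i using Fin.cases with
        | zero => simpa using sub_nonneg.2 hw1
        | succ j => simpa using hw0 j)
      (by
        rw [Fin.sum_univ_succ]
        simp)
      (by intro i _; exact Set.mem_range_self i)
    simp only [Finset.centerMass, Fin.sum_univ_succ, Fin.cons_zero, Fin.cons_succ] at this
    simpa using this

theorem polytope_is_image_of_simplex
    (n k nh : ℕ) (A : Matrix (Fin k) (Fin n) ℝ) (b : Fin k → ℝ)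
    (P : Set (Fin n → ℝ)) (hP : P = {x | ∀ i, A.mulVec x i ≤ b i})
    (hcompact : IsCompact P) (hint : (interior P).Nonempty)
    (v : Fin (nh + 1) → (Fin n → ℝ))
    (hvert : Set.range v = Set.extremePoints ℝ P) :
    P = (fun w : Fin nh → ℝ => v 0 + ∑ i : Fin nh, (w i) • (v i.succ - v 0)) ''
        {w : Fin nh → ℝ | (∀ i, 0 ≤ w i) ∧ (∑ i, w i) ≤ 1} ∧
    P = convexHull ℝ (Set.range v) := by
  have hconv : Convex ℝ P := by
    rw [hP]
    intro x hx y hy a c ha hc hac i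
    have h1 : A.mulVec (a • x + c • y) i = a * A.mulVec x i + c * A.mulVec y i := by
      rw [Matrix.mulVec_add, A.mulVec_smul, A.mulVec_smul]
      simp
    rw [h1]
    calc a * A.mulVec x i + c * A.mulVec y i ≤ a * b i + c * b i := by
          gcongr
          exacts [hx i, hy i]
      _ = b i := by rw [← add_mul, hac, one_mul]
  have hPconv : P = convexHull ℝ (Set.range v) := by
    have hKM : closure (convexHull ℝ (Set.extremePoints ℝ P)) = P :=
      closure_convexHull_extremePoints hcompact hconv
    rw [← hvert] at hKM
    rw [← hKM, IsClosed.closure_eq]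
    exact (Set.finite_range v).isClosed_convexHull (𝕜 := ℝ)
  exact ⟨by rw [hPconv, convexHull_range_eq_image_simplex], hPconv⟩
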